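/- With m₁(n) = n D(n−1) and m₂(n) = n²{D(n−1)² − 2D'(n−1)}, one has m₁(n) → 1, m₂(n) → 3, and hence m₂(n) − m₁(n)² → 2, as the integer n → ∞. -/

import Mathlib

open Real Filter
open Set Topology

/-- The digamma function `Ψ(x) = d/dx log Γ(x)`. -/
noncomputable def digamma (x : ℝ) : ℝ :=
  deriv (fun y => Real.log (Real.Gamma y)) x

/-- `D(ν) = Ψ((ν+1)/2) − Ψ(ν/2)`. -/
noncomputable def Dfun (ν : ℝ) : ℝ :=
  digamma ((ν + 1) / 2) - digamma (ν / 2)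

/-- `m₁(n) = n D(n−1)`. -/
noncomputable def m₁ (n : ℕ) : ℝ := (n : ℝ) * Dfun ((n : ℝ) - 1)

/-- `m₂(n) = n² (D(n−1)² − 2 D'(n−1))`. -/
noncomputable def m₂ (n : ℕ) : ℝ :=
  (n : ℝ) ^ 2 * ((Dfun ((n : ℝ) - 1)) ^ 2 - 2 * deriv Dfun ((n : ℝ) - 1))

lemma diffAt_logGamma {x : ℝ} (hx : 0 < x) :
    DifferentiableAt ℝ (fun y => Real.log (Real.Gamma y)) x := by
  exact (Real.differentiableAt_Gamma (fun m => ((neg_nonpos.mpr (Nat.cast_nonneg m)).trans_lt hx).ne')).log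
    (Real.Gamma_pos_of_pos hx).ne'

lemma hasDerivAt_logGamma {x : ℝ} (hx : 0 < x) :
    HasDerivAt (fun y => Real.log (Real.Gamma y)) (digamma x) x :=
  (diffAt_logGamma hx).hasDerivAt

lemma digamma_add_one {x : ℝ} (hx : 0 < x) : digamma (x + 1) = digamma x + 1 / x := by
  have h1 : HasDerivAt (fun y => Real.log (Real.Gamma (y + 1))) (digamma (x + 1)) x :=
    (hasDerivAt_logGamma (by linarith)).comp_add_const x 1
  have h2 : HasDerivAt (fun y => Real.log (Real.Gamma y) + Real.log y)
      (digamma x + 1 / x) x := by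
    simpa [one_div] using (hasDerivAt_logGamma hx).fun_add (Real.hasDerivAt_log hx.ne')
  refine h1.unique (h2.congr_of_eventuallyEq ?_)
  filter_upwards [eventually_gt_nhds hx] with y hy
  rw [Real.Gamma_add_one hy.ne', Real.log_mul hy.ne' (Real.Gamma_pos_of_pos hy).ne', add_comm]

lemma digamma_mono : MonotoneOn digamma (Ioi 0) := by
  have := Real.convexOn_log_Gamma.monotoneOn_deriv
    (fun x hx => diffAt_logGamma (mem_Ioi.mp hx))
  exact this

lemma Dfun_add_one {ν : ℝ} (hν : 0 < ν) : Dfun ν + Dfun (ν + 1) = 2 / ν := by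
  have h : (ν + 1 + 1) / 2 = ν / 2 + 1 := by ring
  have := digamma_add_one (x := ν / 2) (by linarith)
  unfold Dfun
  rw [h, this]
  field_simp
  ring

lemma Dfun_nonneg {ν : ℝ} (hν : 0 < ν) : 0 ≤ Dfun ν := by
  have := digamma_mono (mem_Ioi.mpr (by linarith : (0:ℝ) < ν / 2))
    (mem_Ioi.mpr (by linarith : (0:ℝ) < (ν + 1) / 2)) (by linarith)
  simpa [Dfun] using this

lemma Dfun_le {ν : ℝ} (hν : 0 < ν) : Dfun ν ≤ 2 / ν := by
  have h := Dfun_add_one hν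
  have h2 := Dfun_nonneg (by linarith : (0:ℝ) < ν + 1)
  linarith

lemma Dfun_step {ν : ℝ} (hν : 0 < ν) :
    Dfun (ν + 2) = Dfun ν - 2 / ν + 2 / (ν + 1) := by
  have h1 := Dfun_add_one hν
  have h2 := Dfun_add_one (by linarith : (0:ℝ) < ν + 1)
  have : ν + 1 + 1 = ν + 2 := by ring
  rw [this] at h2
  linarith

lemma tendsto_aux (ν : ℝ) : Tendsto (fun k : ℕ => ν + 2 * (k:ℝ)) atTop atTop :=
  tendsto_atTop_add_const_left _ ν
    (tendsto_natCast_atTop_atTop.const_mul_atTop two_pos)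

lemma tendsto_inv_aux (ν : ℝ) : Tendsto (fun k : ℕ => 1 / (ν + 2 * (k:ℝ))) atTop (𝓝 0) := by
  simpa [one_div, Pi.inv_def] using (tendsto_aux ν).inv_tendsto_atTop

lemma Dfun_lb_k (k : ℕ) : ∀ ν : ℝ, 0 < ν → 1/ν - 1/(ν + 2*k) ≤ Dfun ν := by
  induction k with
  | zero => intro ν hν; simpa using Dfun_nonneg hν
  | succ k ih =>
    intro ν hν
    have h2 := Dfun_step hν
    have hk := ih (ν + 2) (by linarith)
    have key : 1/ν - 2/(ν+1) + 1/(ν+2) = 2/(ν*(ν+1)*(ν+2)) := by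
      field_simp
      ring
    have pos : (0:ℝ) ≤ 2/(ν*(ν+1)*(ν+2)) := by positivity
    have hrw : ν + 2 + 2*(k:ℝ) = ν + 2*((k:ℕ)+1 : ℕ) := by push_cast; ring
    rw [hrw] at hk
    have ex1 : 2/ν = 2*(1/ν) := by ring
    have ex2 : 2/(ν+1) = 2*(1/(ν+1)) := by ring
    linarith

lemma Dfun_ge {ν : ℝ} (hν : 0 < ν) : 1/ν ≤ Dfun ν := by
  have hlim : Tendsto (fun k : ℕ => 1/ν - 1/(ν + 2*(k:ℝ))) atTop (𝓝 (1/ν)) := by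
    simpa using tendsto_const_nhds.sub (tendsto_inv_aux ν)
  exact le_of_tendsto hlim (Eventually.of_forall fun k => Dfun_lb_k k ν hν)

lemma Dfun_ub_k (k : ℕ) : ∀ ν : ℝ, 1 < ν →
    Dfun ν ≤ 1/(ν-1) - 1/(ν-1+2*k) + 2/(ν+2*k) := by
  induction k with
  | zero =>
    intro ν hν
    have := Dfun_le (by linarith : (0:ℝ) < ν)
    simpa using this
  | succ k ih =>
    intro ν hν
    have h2 := Dfun_step (by linarith : (0:ℝ) < ν)
    have hk := ih (ν + 2) (by linarith)
    have h0 : (0:ℝ) < ν - 1 := by linarith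
    have h1 : (0:ℝ) < ν := by linarith
    have key : 1/(ν-1) + 1/(ν+1) - 2/ν = 2/((ν-1)*ν*(ν+1)) := by
      field_simp
      ring
    have pos : (0:ℝ) ≤ 2/((ν-1)*ν*(ν+1)) := by positivity
    have e1 : ν + 2 - 1 + 2*(k:ℝ) = ν - 1 + 2*((k:ℕ)+1:ℕ) := by push_cast; ring
    have e2 : ν + 2 + 2*(k:ℝ) = ν + 2*((k:ℕ)+1:ℕ) := by push_cast; ring
    rw [e1, e2] at hk
    have e3 : ν + 2 - 1 = ν + 1 := by ring
    rw [e3] at hk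
    have ex1 : 2/ν = 2*(1/ν) := by ring
    have ex2 : 2/(ν+1) = 2*(1/(ν+1)) := by ring
    linarith

lemma Dfun_le' {ν : ℝ} (hν : 1 < ν) : Dfun ν ≤ 1/(ν-1) := by
  have hlim : Tendsto (fun k : ℕ => 1/(ν-1) - 1/(ν-1+2*(k:ℝ)) + 2/(ν+2*(k:ℝ)))
      atTop (𝓝 (1/(ν-1))) := by
    have h1 := tendsto_inv_aux (ν-1)
    have h2 := tendsto_inv_aux ν
    have h3 : Tendsto (fun k : ℕ => 2/(ν+2*(k:ℝ))) atTop (𝓝 0) := by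
      have := h2.const_mul 2
      simpa [div_eq_mul_inv, mul_comm, mul_assoc, one_div] using this
    simpa using (tendsto_const_nhds.sub h1).add h3
  exact ge_of_tendsto hlim (Eventually.of_forall fun k => Dfun_ub_k k ν hν)

lemma analyticAt_complexGamma {z : ℂ} (hz : 0 < z.re) : AnalyticAt ℂ Complex.Gamma z := by
  have hopen : IsOpen {s : ℂ | 0 < s.re} := isOpen_lt continuous_const Complex.continuous_re
  have hdiff : DifferentiableOn ℂ Complex.Gamma {s : ℂ | 0 < s.re} := fun s hs =>
    (Complex.differentiableAt_Gamma s (fun m => by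
      intro h
      rw [h] at hs
      simp only [mem_setOf_eq, Complex.neg_re, Complex.natCast_re] at hs
      have : (0:ℝ) ≤ (m:ℝ) := Nat.cast_nonneg m
      linarith)).differentiableWithinAt
  exact hdiff.analyticAt (hopen.mem_nhds hz)

lemma analyticAt_realGamma {x : ℝ} (hx : 0 < x) : AnalyticAt ℝ Real.Gamma x := by
  have h1 : AnalyticAt ℝ (fun y : ℝ => Complex.Gamma (y : ℂ)) x :=
    ((analyticAt_complexGamma (by simpa using hx)).restrictScalars).comp
      (Complex.ofRealCLM.analyticAt x)
  have h2 : AnalyticAt ℝ (fun y : ℝ => (Complex.Gamma (y : ℂ)).re) x :=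
    (Complex.reCLM.analyticAt _).comp h1
  refine h2.congr ?_
  filter_upwards with y
  rw [Complex.Gamma_ofReal]
  simp

lemma analyticOnNhd_realGamma : AnalyticOnNhd ℝ Real.Gamma (Ioi 0) :=
  fun _ hx => analyticAt_realGamma (mem_Ioi.mp hx)

lemma differentiableAt_digamma {x : ℝ} (hx : 0 < x) : DifferentiableAt ℝ digamma x := by
  have hG : ∀ y : ℝ, 0 < y → Real.Gamma y ≠ 0 := fun y hy => (Real.Gamma_pos_of_pos hy).ne'
  have hd : ∀ y : ℝ, 0 < y → DifferentiableAt ℝ Real.Gamma y := fun y hy =>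
    Real.differentiableAt_Gamma (fun m => ((neg_nonpos.mpr (Nat.cast_nonneg m)).trans_lt hy).ne')
  have heq : digamma =ᶠ[𝓝 x] fun y => deriv Real.Gamma y / Real.Gamma y := by
    filter_upwards [eventually_gt_nhds hx] with y hy
    have : HasDerivAt (fun z => Real.log (Real.Gamma z))
        (deriv Real.Gamma y / Real.Gamma y) y :=
      ((hd y hy).hasDerivAt).log (hG y hy)
    simpa [digamma] using this.deriv
  have hdiff : DifferentiableAt ℝ (fun y => deriv Real.Gamma y / Real.Gamma y) x := by
    have h1 : AnalyticAt ℝ (deriv Real.Gamma) x :=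
      (analyticOnNhd_realGamma.deriv_of_isOpen isOpen_Ioi) x (mem_Ioi.mpr hx)
    exact (h1.differentiableAt).div ((analyticAt_realGamma hx).differentiableAt) (hG x hx)
  exact hdiff.congr_of_eventuallyEq heq

lemma differentiableAt_Dfun {ν : ℝ} (hν : 0 < ν) : DifferentiableAt ℝ Dfun ν := by
  have h1 : DifferentiableAt ℝ (fun y : ℝ => digamma ((y + 1) / 2)) ν := by
    have := (differentiableAt_digamma (by linarith : (0:ℝ) < (ν + 1)/2)).comp ν
      (((differentiableAt_id.add_const (1:ℝ)).div_const (2:ℝ)))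
    simpa [Function.comp_def] using this
  have h2 : DifferentiableAt ℝ (fun y : ℝ => digamma (y / 2)) ν := by
    have := (differentiableAt_digamma (by linarith : (0:ℝ) < ν/2)).comp ν
      (differentiableAt_id.div_const (2:ℝ))
    simpa [Function.comp_def] using this
  exact h1.sub h2

-- (I) derivative recurrence
lemma deriv_Dfun_add_one {ν : ℝ} (hν : 0 < ν) :
    deriv Dfun ν + deriv Dfun (ν + 1) = -(2 / ν^2) := by
  have h1 : HasDerivAt (fun y => Dfun y + Dfun (y + 1))
      (deriv Dfun ν + deriv Dfun (ν + 1)) ν :=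
    ((differentiableAt_Dfun hν).hasDerivAt).add
      (((differentiableAt_Dfun (by linarith : (0:ℝ) < ν + 1)).hasDerivAt).comp_add_const ν 1)
  have h2 : HasDerivAt (fun y : ℝ => 2 / y) (-(2 / ν^2)) ν := by
    have := (hasDerivAt_inv hν.ne').const_mul 2
    simpa [div_eq_mul_inv, neg_div, mul_div_assoc] using this
  refine (h1.congr_of_eventuallyEq ?_).unique h2
  filter_upwards [eventually_gt_nhds hν] with y hy
  exact (Dfun_add_one hy).symm

lemma deriv_Dfun_step {ν : ℝ} (hν : 0 < ν) :
    deriv Dfun (ν + 2) = deriv Dfun ν + 2 / ν^2 - 2 / (ν+1)^2 := by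
  have h1 := deriv_Dfun_add_one hν
  have h2 := deriv_Dfun_add_one (by linarith : (0:ℝ) < ν + 1)
  have e : ν + 1 + 1 = ν + 2 := by ring
  rw [e] at h2
  linarith

-- (III) convexity of the basic term
lemma convexOn_term (c : ℝ) (hc : 0 ≤ c) :
    ConvexOn ℝ (Ioi 0) (fun x : ℝ => 2/(x+c) - 2/(x+c+1)) := by
  set f : ℝ → ℝ := fun x => 2/(x+c) - 2/(x+c+1) with hf
  set f1 : ℝ → ℝ := fun x => -(2/(x+c)^2) + 2/(x+c+1)^2 with hf1
  have hder : ∀ x : ℝ, 0 < x → HasDerivAt f (f1 x) x := by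
    intro x hx
    have hxc : (0:ℝ) < x + c := by linarith
    have hxc1 : (0:ℝ) < x + c + 1 := by linarith
    have h0 : HasDerivAt (fun y : ℝ => y + c) 1 x := by
      simpa using (hasDerivAt_id x).add_const c
    have h0' : HasDerivAt (fun y : ℝ => y + c + 1) 1 x := by
      simpa using h0.add_const 1
    have d1 : HasDerivAt (fun y : ℝ => 2/(y+c)) (-(2/(x+c)^2)) x := by
      have h2 := (h0.inv hxc.ne').const_mul 2
      have h3 : HasDerivAt (fun y : ℝ => 2/(y+c)) (2 * (-1 / (x+c)^2)) x := by
        simpa [div_eq_mul_inv] using h2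
      exact h3.congr_deriv (by ring)
    have d2 : HasDerivAt (fun y : ℝ => 2/(y+c+1)) (-(2/(x+c+1)^2)) x := by
      have h2 := (h0'.inv hxc1.ne').const_mul 2
      have h3 : HasDerivAt (fun y : ℝ => 2/(y+c+1)) (2 * (-1 / (x+c+1)^2)) x := by
        simpa [div_eq_mul_inv] using h2
      exact h3.congr_deriv (by ring)
    have := d1.sub d2
    refine this.congr_deriv ?_
    simp [hf1]
  have hder1 : ∀ x : ℝ, 0 < x →
      HasDerivAt f1 (4/(x+c)^3 - 4/(x+c+1)^3) x := by
    intro x hx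
    have hxc : (0:ℝ) < x + c := by linarith
    have hxc1 : (0:ℝ) < x + c + 1 := by linarith
    have h0 : HasDerivAt (fun y : ℝ => y + c) 1 x := by
      simpa using (hasDerivAt_id x).add_const c
    have h0' : HasDerivAt (fun y : ℝ => y + c + 1) 1 x := by
      simpa using h0.add_const 1
    have hp : HasDerivAt (fun y : ℝ => (y+c)^2) (2*(x+c)) x := by
      simpa using h0.fun_pow 2
    have hp' : HasDerivAt (fun y : ℝ => (y+c+1)^2) (2*(x+c+1)) x := by
      simpa using h0'.fun_pow 2
    have d1 : HasDerivAt (fun y : ℝ => 2/(y+c)^2) (2 * (-(2*(x+c)) / ((x+c)^2)^2)) x := by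
      have := (hp.inv (pow_ne_zero 2 hxc.ne')).const_mul 2
      simpa [div_eq_mul_inv] using this
    have d2 : HasDerivAt (fun y : ℝ => 2/(y+c+1)^2) (2 * (-(2*(x+c+1)) / ((x+c+1)^2)^2)) x := by
      have := (hp'.inv (pow_ne_zero 2 hxc1.ne')).const_mul 2
      simpa [div_eq_mul_inv] using this
    have h4 := d1.fun_neg.fun_add d2
    have h5 : HasDerivAt f1 (-(2 * (-(2*(x+c)) / ((x+c)^2)^2)) + 2 * (-(2*(x+c+1)) / ((x+c+1)^2)^2)) x := by
      simpa [hf1] using h4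
    refine h5.congr_deriv ?_
    field_simp
    ring
  have hEq : ∀ x : ℝ, 0 < x → deriv f =ᶠ[𝓝 x] f1 := by
    intro x hx
    filter_upwards [eventually_gt_nhds hx] with y hy
    exact (hder y hy).deriv
  refine convexOn_of_deriv2_nonneg (convex_Ioi 0) ?_ ?_ ?_ ?_
  · intro x hx
    exact ((hder x hx).differentiableAt).continuousAt.continuousWithinAt
  · rw [interior_Ioi]
    exact fun x hx => ((hder x hx).differentiableAt).differentiableWithinAt
  · rw [interior_Ioi]
    intro x hx
    have : DifferentiableAt ℝ f1 x := (hder1 x hx).differentiableAt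
    exact (this.congr_of_eventuallyEq (hEq x hx)).differentiableWithinAt
  · rw [interior_Ioi]
    intro x hx
    rw [mem_Ioi] at hx
    have hxc : (0:ℝ) < x + c := by linarith
    have hxc1 : (0:ℝ) < x + c + 1 := by linarith
    have e1 : deriv^[2] f x = deriv (deriv f) x := by
      simp [Function.iterate_succ, Function.iterate_zero]
    rw [e1, (hEq x hx).deriv_eq, (hder1 x hx).deriv]
    have hle : (x+c)^3 ≤ (x+c+1)^3 := by nlinarith
    have : 4/(x+c+1)^3 ≤ 4/(x+c)^3 :=
      div_le_div_of_nonneg_left (by norm_num) (pow_pos hxc 3) hle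
    linarith

noncomputable def Tsum (k : ℕ) : ℝ → ℝ :=
  fun ν => ∑ i ∈ Finset.range k, (2/(ν+2*(i:ℝ)) - 2/(ν+2*(i:ℝ)+1))

lemma convexOn_Tsum (k : ℕ) : ConvexOn ℝ (Ioi 0) (Tsum k) := by
  induction k with
  | zero =>
    rw [show Tsum 0 = fun _ => (0:ℝ) from by funext ν; simp [Tsum]]
    exact convexOn_const (0:ℝ) (convex_Ioi (0:ℝ))
  | succ k ih =>
    have h : Tsum (k+1) = fun ν => Tsum k ν + (2/(ν+2*(k:ℝ)) - 2/(ν+2*(k:ℝ)+1)) := by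
      funext ν
      simp [Tsum, Finset.sum_range_succ]
      ring
    rw [h]
    exact ih.add (convexOn_term (2*(k:ℝ)) (by positivity))

lemma Dfun_eq_Tsum (k : ℕ) : ∀ ν : ℝ, 0 < ν → Dfun ν = Dfun (ν + 2*(k:ℝ)) + Tsum k ν := by
  induction k with
  | zero => intro ν hν; simp [Tsum]
  | succ k ih =>
    intro ν hν
    have h1 := ih ν hν
    have h2 := Dfun_step (by linarith [Nat.cast_nonneg (α := ℝ) k] : (0:ℝ) < ν + 2*(k:ℝ))
    have h3 : Tsum (k+1) ν = Tsum k ν + (2/(ν+2*(k:ℝ)) - 2/(ν+2*(k:ℝ)+1)) := by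
      simp [Tsum, Finset.sum_range_succ]
      ring
    have e1 : ν + 2*((k:ℕ)+1:ℕ) = ν + 2*(k:ℝ) + 2 := by push_cast; ring
    rw [e1, h2, h3]
    linarith

lemma Dfun_tail {μ : ℝ} (hμ : 0 < μ) :
    Tendsto (fun k : ℕ => Dfun (μ + 2*(k:ℝ))) atTop (𝓝 0) := by
  have hpos : ∀ k : ℕ, (0:ℝ) < μ + 2*(k:ℝ) := fun k => by
    have := Nat.cast_nonneg (α := ℝ) k; linarith
  refine squeeze_zero (fun k => Dfun_nonneg (hpos k)) (fun k => Dfun_le (hpos k)) ?_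
  have := (tendsto_inv_aux μ).const_mul 2
  simpa [div_eq_mul_inv, one_div, mul_comm] using this

lemma convexOn_Dfun : ConvexOn ℝ (Ioi 0) Dfun := by
  refine ⟨convex_Ioi 0, fun x hx y hy a b ha hb hab => ?_⟩
  have hz : a • x + b • y ∈ Ioi (0:ℝ) := (convex_Ioi 0) hx hy ha hb hab
  rw [mem_Ioi] at hx hy hz
  simp only [smul_eq_mul] at hz ⊢
  set z := a * x + b * y with hzdef
  have key : ∀ k : ℕ, Dfun z ≤ a * Dfun x + b * Dfun y +
      (Dfun (z + 2*(k:ℝ)) - a * Dfun (x + 2*(k:ℝ)) - b * Dfun (y + 2*(k:ℝ))) := by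
    intro k
    have hT := (convexOn_Tsum k).2 (mem_Ioi.mpr hx) (mem_Ioi.mpr hy) ha hb hab
    simp only [smul_eq_mul] at hT
    have e1 := Dfun_eq_Tsum k z hz
    have e2 := Dfun_eq_Tsum k x hx
    have e3 := Dfun_eq_Tsum k y hy
    have hTz : Tsum k z ≤ a * Tsum k x + b * Tsum k y := hT
    nlinarith [hTz]
  have hlim : Tendsto (fun k : ℕ => a * Dfun x + b * Dfun y +
      (Dfun (z + 2*(k:ℝ)) - a * Dfun (x + 2*(k:ℝ)) - b * Dfun (y + 2*(k:ℝ)))) atTop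
      (𝓝 (a * Dfun x + b * Dfun y)) := by
    have h := ((Dfun_tail hz).sub ((Dfun_tail hx).const_mul a)).sub ((Dfun_tail hy).const_mul b)
    have h2 := h.const_add (a * Dfun x + b * Dfun y)
    simpa using h2
  exact ge_of_tendsto hlim (Eventually.of_forall key)

lemma deriv_Dfun_nonpos {μ : ℝ} (hμ : 2 < μ) : deriv Dfun μ ≤ 0 := by
  have h := convexOn_Dfun.deriv_le_slope (mem_Ioi.mpr (by linarith : (0:ℝ) < μ))
    (mem_Ioi.mpr (by linarith : (0:ℝ) < μ + 1)) (by linarith)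
    (differentiableAt_Dfun (by linarith))
  rw [slope_def_field] at h
  have e : (μ + 1 - μ) = (1:ℝ) := by ring
  rw [e, div_one] at h
  have h1 : Dfun (μ + 1) ≤ 1/μ := by
    have := Dfun_le' (by linarith : (1:ℝ) < μ + 1)
    simpa using this
  have h2 : 1/μ ≤ Dfun μ := Dfun_ge (by linarith)
  linarith

lemma deriv_Dfun_lb {μ : ℝ} (hμ : 2 < μ) : 1/μ - 1/(μ-2) ≤ deriv Dfun μ := by
  have h := convexOn_Dfun.slope_le_deriv (mem_Ioi.mpr (by linarith : (0:ℝ) < μ - 1))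
    (mem_Ioi.mpr (by linarith : (0:ℝ) < μ)) (by linarith)
    (differentiableAt_Dfun (by linarith))
  rw [slope_def_field] at h
  have e : (μ - (μ - 1)) = (1:ℝ) := by ring
  rw [e, div_one] at h
  have h1 : Dfun (μ - 1) ≤ 1/(μ-2) := by
    have := Dfun_le' (by linarith : (1:ℝ) < μ - 1)
    have e2 : μ - 1 - 1 = μ - 2 := by ring
    rwa [e2] at this
  have h2 : 1/μ ≤ Dfun μ := Dfun_ge (by linarith)
  linarith

lemma deriv_Dfun_tail {ν : ℝ} (hν : 0 < ν) :
    Tendsto (fun k : ℕ => deriv Dfun (ν + 2*(k:ℝ))) atTop (𝓝 0) := by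
  have hev : ∀ᶠ k : ℕ in atTop, 2 < ν + 2*(k:ℝ) := (tendsto_aux ν).eventually_gt_atTop 2
  have hg : Tendsto (fun k : ℕ => 1/(ν + 2*(k:ℝ)) - 1/((ν-2) + 2*(k:ℝ))) atTop (𝓝 0) := by
    simpa using (tendsto_inv_aux ν).sub (tendsto_inv_aux (ν-2))
  refine tendsto_of_tendsto_of_tendsto_of_le_of_le' hg tendsto_const_nhds ?_ ?_
  · filter_upwards [hev] with k hk
    have e : ν - 2 + 2*(k:ℝ) = ν + 2*(k:ℝ) - 2 := by ring
    rw [e]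
    exact deriv_Dfun_lb hk
  · filter_upwards [hev] with k hk
    exact deriv_Dfun_nonpos hk

lemma tendsto_inv_sq_aux (ν : ℝ) :
    Tendsto (fun k : ℕ => 1/(ν + 2*(k:ℝ))^2) atTop (𝓝 0) := by
  have h := (tendsto_inv_aux ν).mul (tendsto_inv_aux ν)
  have e : (fun k : ℕ => 1/(ν + 2*(k:ℝ))^2)
      = fun k : ℕ => (1/(ν + 2*(k:ℝ))) * (1/(ν + 2*(k:ℝ))) := by
    funext k; rw [pow_two, div_mul_div_comm, one_mul]
  rw [e]
  simpa only [mul_zero] using h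

lemma deriv_Dfun_ub_k (k : ℕ) : ∀ ν : ℝ, 0 < ν →
    deriv Dfun ν ≤ deriv Dfun (ν + 2*(k:ℝ)) - 1/ν^2 + 1/(ν + 2*(k:ℝ))^2 := by
  induction k with
  | zero => intro ν hν; simp
  | succ k ih =>
    intro ν hν
    have hstep := deriv_Dfun_step hν
    have hk := ih (ν + 2) (by linarith)
    have e1 : ν + 2 + 2*(k:ℝ) = ν + 2*((k:ℕ)+1:ℕ) := by push_cast; ring
    rw [e1] at hk
    have key : 1/ν^2 + 1/(ν+2)^2 - 2/(ν+1)^2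
        = (6*ν^2+12*ν+4)/(ν^2*(ν+1)^2*(ν+2)^2) := by
      field_simp
      ring
    have pos : (0:ℝ) ≤ (6*ν^2+12*ν+4)/(ν^2*(ν+1)^2*(ν+2)^2) := by positivity
    have ex1 : 2/ν^2 = 2*(1/ν^2) := by ring
    have ex2 : 2/(ν+1)^2 = 2*(1/(ν+1)^2) := by ring
    linarith

lemma deriv_Dfun_ub {ν : ℝ} (hν : 0 < ν) : deriv Dfun ν ≤ -(1/ν^2) := by
  have hlim : Tendsto (fun k : ℕ => deriv Dfun (ν + 2*(k:ℝ)) - 1/ν^2 + 1/(ν + 2*(k:ℝ))^2)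
      atTop (𝓝 (-(1/ν^2))) := by
    have := ((deriv_Dfun_tail hν).sub (tendsto_const_nhds (x := (1/ν^2 : ℝ)))).add
      (tendsto_inv_sq_aux ν)
    simpa using this
  exact ge_of_tendsto hlim (Eventually.of_forall fun k => deriv_Dfun_ub_k k ν hν)

lemma deriv_Dfun_lb_k (k : ℕ) : ∀ ν : ℝ, 1 < ν →
    deriv Dfun (ν + 2*(k:ℝ)) - 1/(ν-1)^2 + 1/(ν-1 + 2*(k:ℝ))^2 ≤ deriv Dfun ν := by
  induction k with
  | zero => intro ν hν; simp
  | succ k ih =>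
    intro ν hν
    have hstep := deriv_Dfun_step (by linarith : (0:ℝ) < ν)
    have hk := ih (ν + 2) (by linarith)
    have e1 : ν + 2 + 2*(k:ℝ) = ν + 2*((k:ℕ)+1:ℕ) := by push_cast; ring
    have e2 : ν + 2 - 1 = ν + 1 := by ring
    have e3 : ν + 2 - 1 + 2*(k:ℝ) = ν - 1 + 2*((k:ℕ)+1:ℕ) := by push_cast; ring
    rw [e3, e1, e2] at hk
    have h0 : (0:ℝ) < ν - 1 := by linarith
    have h1 : (0:ℝ) < ν := by linarith
    have key : 1/(ν-1)^2 + 1/(ν+1)^2 - 2/ν^2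
        = (6*ν^2-2)/((ν-1)^2*ν^2*(ν+1)^2) := by
      field_simp
      ring
    have pos : (0:ℝ) ≤ (6*ν^2-2)/((ν-1)^2*ν^2*(ν+1)^2) := by
      apply div_nonneg
      · nlinarith
      · positivity
    have ex1 : 2/ν^2 = 2*(1/ν^2) := by ring
    have ex2 : 2/(ν+1)^2 = 2*(1/(ν+1)^2) := by ring
    linarith

lemma deriv_Dfun_lb' {ν : ℝ} (hν : 1 < ν) : -(1/(ν-1)^2) ≤ deriv Dfun ν := by
  have hlim : Tendsto (fun k : ℕ => deriv Dfun (ν + 2*(k:ℝ)) - 1/(ν-1)^2 + 1/(ν-1 + 2*(k:ℝ))^2)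
      atTop (𝓝 (-(1/(ν-1)^2))) := by
    have := ((deriv_Dfun_tail (by linarith : (0:ℝ) < ν)).sub
      (tendsto_const_nhds (x := (1/(ν-1)^2 : ℝ)))).add (tendsto_inv_sq_aux (ν-1))
    simpa using this
  exact le_of_tendsto hlim (Eventually.of_forall fun k => deriv_Dfun_lb_k k ν hν)

lemma tendsto_one_div_nat_sub (c : ℝ) :
    Tendsto (fun n : ℕ => 1/((n:ℝ) - c)) atTop (𝓝 0) := by
  have h : Tendsto (fun n : ℕ => (n:ℝ) + (-c)) atTop atTop :=
    tendsto_atTop_add_const_right atTop (-c) tendsto_natCast_atTop_atTop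
  simpa [one_div, sub_eq_add_neg, Pi.inv_def] using h.inv_tendsto_atTop

lemma tendsto_m₁ : Tendsto (fun n : ℕ => m₁ n) atTop (𝓝 1) := by
  have hL : Tendsto (fun n : ℕ => 1 + 1/((n:ℝ)-1)) atTop (𝓝 1) := by
    simpa using (tendsto_one_div_nat_sub 1).const_add 1
  have hU : Tendsto (fun n : ℕ => 1 + 2*(1/((n:ℝ)-2))) atTop (𝓝 1) := by
    simpa using ((tendsto_one_div_nat_sub 2).const_mul 2).const_add 1
  refine tendsto_of_tendsto_of_tendsto_of_le_of_le' hL hU ?_ ?_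
  · filter_upwards [eventually_ge_atTop 3] with n hn
    have hx : (3:ℝ) ≤ (n:ℝ) := by exact_mod_cast hn
    set x := (n:ℝ) with hxdef
    have h1 : (0:ℝ) < x - 1 := by linarith
    have hD := Dfun_ge h1
    have h2 : x * (1/(x-1)) ≤ x * Dfun (x-1) :=
      mul_le_mul_of_nonneg_left hD (by linarith)
    have e : x * (1/(x-1)) = 1 + 1/(x-1) := by field_simp; ring
    rw [e] at h2
    simpa [m₁] using h2
  · filter_upwards [eventually_ge_atTop 3] with n hn
    have hx : (3:ℝ) ≤ (n:ℝ) := by exact_mod_cast hn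
    set x := (n:ℝ) with hxdef
    have h1 : (1:ℝ) < x - 1 := by linarith
    have hD := Dfun_le' h1
    have e2 : x - 1 - 1 = x - 2 := by ring
    rw [e2] at hD
    have h2 : x * Dfun (x-1) ≤ x * (1/(x-2)) :=
      mul_le_mul_of_nonneg_left hD (by linarith)
    have hne : x - 2 ≠ 0 := by linarith
    have e : x * (1/(x-2)) = 1 + 2*(1/(x-2)) := by
      rw [mul_one_div]
      field_simp
      ring
    rw [e] at h2
    simpa [m₁] using h2

lemma tendsto_sq_deriv : Tendsto (fun n : ℕ => (n:ℝ)^2 * deriv Dfun ((n:ℝ)-1))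
    atTop (𝓝 (-1)) := by
  have hA : Tendsto (fun n : ℕ => 1 + 1/((n:ℝ)-1)) atTop (𝓝 1) := by
    simpa using (tendsto_one_div_nat_sub 1).const_add 1
  have hB : Tendsto (fun n : ℕ => 1 + 2*(1/((n:ℝ)-2))) atTop (𝓝 1) := by
    simpa using ((tendsto_one_div_nat_sub 2).const_mul 2).const_add 1
  have hU : Tendsto (fun n : ℕ => -((1 + 1/((n:ℝ)-1)) * (1 + 1/((n:ℝ)-1))))
      atTop (𝓝 (-1)) := by
    simpa using (hA.mul hA).neg
  have hL : Tendsto (fun n : ℕ => -((1 + 2*(1/((n:ℝ)-2))) * (1 + 2*(1/((n:ℝ)-2)))))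
      atTop (𝓝 (-1)) := by
    simpa using (hB.mul hB).neg
  refine tendsto_of_tendsto_of_tendsto_of_le_of_le' hL hU ?_ ?_
  · filter_upwards [eventually_ge_atTop 4] with n hn
    have hx : (4:ℝ) ≤ (n:ℝ) := by exact_mod_cast hn
    set x := (n:ℝ) with hxdef
    have h1 : (1:ℝ) < x - 1 := by linarith
    have hne : x - 2 ≠ 0 := by linarith
    have hD := deriv_Dfun_lb' h1
    have e2 : x - 1 - 1 = x - 2 := by ring
    rw [e2] at hD
    have h2 : x^2 * (-(1/(x-2)^2)) ≤ x^2 * deriv Dfun (x-1) :=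
      mul_le_mul_of_nonneg_left hD (by positivity)
    have key : (1 + 2*(1/(x-2))) = x/(x-2) := by field_simp; ring
    have e : x^2 * (-(1/(x-2)^2)) = -((1 + 2*(1/(x-2))) * (1 + 2*(1/(x-2)))) := by
      rw [key, div_mul_div_comm, ← pow_two, ← pow_two, mul_neg, mul_one_div]
    rw [e] at h2
    exact h2
  · filter_upwards [eventually_ge_atTop 4] with n hn
    have hx : (4:ℝ) ≤ (n:ℝ) := by exact_mod_cast hn
    set x := (n:ℝ) with hxdef
    have h1 : (0:ℝ) < x - 1 := by linarith
    have hne : x - 1 ≠ 0 := by linarith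
    have hD := deriv_Dfun_ub h1
    have h2 : x^2 * deriv Dfun (x-1) ≤ x^2 * (-(1/(x-1)^2)) :=
      mul_le_mul_of_nonneg_left hD (by positivity)
    have key : (1 + 1/(x-1)) = x/(x-1) := by field_simp; ring
    have e : x^2 * (-(1/(x-1)^2)) = -((1 + 1/(x-1)) * (1 + 1/(x-1))) := by
      rw [key, div_mul_div_comm, ← pow_two, ← pow_two, mul_neg, mul_one_div]
    rw [e] at h2
    exact h2

lemma tendsto_third : Tendsto (fun n : ℕ => m₂ n - (m₁ n) ^ 2) atTop (𝓝 2) := by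
  have h := tendsto_sq_deriv.const_mul (-2)
  have e : (fun n : ℕ => m₂ n - (m₁ n) ^ 2)
      = fun n : ℕ => (-2) * ((n:ℝ)^2 * deriv Dfun ((n:ℝ)-1)) := by
    funext n
    simp only [m₁, m₂]
    ring
  rw [e]
  simpa using h

lemma tendsto_m₂ : Tendsto (fun n : ℕ => m₂ n) atTop (𝓝 3) := by
  have h := (tendsto_m₁.mul tendsto_m₁).add tendsto_third
  have e : (fun n : ℕ => m₂ n) = fun n : ℕ => m₁ n * m₁ n + (m₂ n - (m₁ n)^2) := by
    funext n; ring
  rw [e]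
  have : (3:ℝ) = 1 * 1 + 2 := by norm_num
  rw [this]
  exact h

theorem m₁_m₂_limits :
    Tendsto (fun n : ℕ => m₁ n) atTop (nhds 1) ∧
    Tendsto (fun n : ℕ => m₂ n) atTop (nhds 3) ∧
    Tendsto (fun n : ℕ => m₂ n - (m₁ n) ^ 2) atTop (nhds 2) := by
  exact ⟨tendsto_m₁, tendsto_m₂, tendsto_third⟩
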